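/- For every real number x with |x| ≤ 1.5, setting y = tanh x, one has (x − y³ − y)·((1/6)·y³ + y − x) ≥ 0; that is, the function tanh satisfies the static polynomial constraint p(x,y) = (x − y³ − y)·((1/6)y³ + y − x) on the interval [−1.5, 1.5]. -/

import Mathlib

open Real

/-- Derivative of `tanh`. -/
lemma hasDerivAt_tanh' (x : ℝ) : HasDerivAt Real.tanh (1 - Real.tanh x ^ 2) x := by
  have hc : Real.cosh x ≠ 0 := (Real.cosh_pos x).ne'
  have h := (Real.hasDerivAt_sinh x).div (Real.hasDerivAt_cosh x) hc
  have hval : (Real.cosh x * Real.cosh x - Real.sinh x * Real.sinh x) / Real.cosh x ^ 2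
      = 1 - Real.tanh x ^ 2 := by
    have h1 := Real.cosh_sq_sub_sinh_sq x
    rw [Real.tanh_eq_sinh_div_cosh, div_pow]
    field_simp
  have h2 : HasDerivAt (fun y => Real.sinh y / Real.cosh y) (1 - Real.tanh x ^ 2) x := by
    rw [← hval]; exact h
  simp only [← Real.tanh_eq_sinh_div_cosh] at h2
  exact h2

lemma tanh_sq_lt_one (x : ℝ) : Real.tanh x ^ 2 < 1 := by
  have h1 := Real.cosh_sq_sub_sinh_sq x
  have hc := Real.cosh_pos x
  rw [Real.tanh_eq_sinh_div_cosh, div_pow, div_lt_one (by positivity)]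
  nlinarith

lemma tanh_strictMono : StrictMono Real.tanh := by
  apply strictMono_of_deriv_pos
  intro x
  rw [(hasDerivAt_tanh' x).deriv]
  nlinarith [_root_.tanh_sq_lt_one x]

lemma tanh_nonneg_of_nonneg {x : ℝ} (hx : 0 ≤ x) : 0 ≤ Real.tanh x := by
  have := tanh_strictMono.le_iff_le.2 hx
  simpa [Real.tanh_zero] using this

/-- `tanh` in terms of `exp (2x)`. -/
lemma tanh_eq_exp (x : ℝ) :
    Real.tanh x = (Real.exp (2 * x) - 1) / (Real.exp (2 * x) + 1) := by
  rw [Real.tanh_eq_sinh_div_cosh, Real.sinh_eq, Real.cosh_eq, Real.exp_neg]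
  have he : Real.exp x ≠ 0 := (Real.exp_pos x).ne'
  have h2 : Real.exp (2 * x) = Real.exp x ^ 2 := by
    rw [two_mul, Real.exp_add, sq]
  rw [h2]
  have hpos : (0:ℝ) < Real.exp x ^ 2 + 1 := by positivity
  field_simp

lemma exp_22_lo : (8.951 : ℝ) ≤ Real.exp 2.2 := by
  have h5 : Real.exp 2.2 ^ 5 = Real.exp 1 ^ 11 := by
    rw [← Real.exp_nat_mul, ← Real.exp_nat_mul]; norm_num
  have he : (2.7182 : ℝ) ≤ Real.exp 1 := le_of_lt (by linarith [Real.exp_one_gt_d9])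
  have h2 : (8.951 : ℝ) ^ 5 ≤ Real.exp 2.2 ^ 5 := by
    rw [h5]
    calc (8.951 : ℝ) ^ 5 ≤ (2.7182 : ℝ) ^ 11 := by norm_num
      _ ≤ Real.exp 1 ^ 11 := pow_le_pow_left₀ (by norm_num) he 11
  exact le_of_pow_le_pow_left₀ (by norm_num) (Real.exp_pos 2.2).le h2

lemma exp_22_hi : Real.exp 2.2 ≤ 9.8932 := by
  have h5 : Real.exp 2.2 ^ 5 = Real.exp 1 ^ 11 := by
    rw [← Real.exp_nat_mul, ← Real.exp_nat_mul]; norm_num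
  have he : Real.exp 1 ≤ (2.7183 : ℝ) := le_of_lt (by linarith [Real.exp_one_lt_d9])
  have h2 : Real.exp 2.2 ^ 5 ≤ (9.8932 : ℝ) ^ 5 := by
    rw [h5]
    calc Real.exp 1 ^ 11 ≤ (2.7183 : ℝ) ^ 11 :=
        pow_le_pow_left₀ (Real.exp_pos 1).le he 11
      _ ≤ (9.8932 : ℝ) ^ 5 := by norm_num
  exact le_of_pow_le_pow_left₀ (by norm_num) (by norm_num) h2

lemma exp_3_hi : Real.exp 3 ≤ 20.088 := by
  have h3 : Real.exp 3 = Real.exp 1 ^ 3 := by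
    rw [← Real.exp_nat_mul]; norm_num
  have he : Real.exp 1 ≤ (2.7183 : ℝ) := le_of_lt (by linarith [Real.exp_one_lt_d9])
  rw [h3]
  calc Real.exp 1 ^ 3 ≤ (2.7183 : ℝ) ^ 3 := pow_le_pow_left₀ (Real.exp_pos 1).le he 3
    _ ≤ 20.088 := by norm_num

lemma tanh_11_lo : (0.799 : ℝ) ≤ Real.tanh 1.1 := by
  have h := tanh_eq_exp 1.1
  have h2 : (2:ℝ) * 1.1 = 2.2 := by norm_num
  rw [h2] at h
  rw [h, le_div_iff₀ (by positivity)]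
  nlinarith [exp_22_lo]

lemma tanh_11_hi : Real.tanh 1.1 ≤ 0.8164 := by
  have h := tanh_eq_exp 1.1
  have h2 : (2:ℝ) * 1.1 = 2.2 := by norm_num
  rw [h2] at h
  rw [h, div_le_iff₀ (by positivity)]
  nlinarith [exp_22_hi, Real.exp_pos 2.2]

lemma tanh_15_hi : Real.tanh 1.5 ≤ 0.906 := by
  have h := tanh_eq_exp 1.5
  have h2 : (2:ℝ) * 1.5 = 3 := by norm_num
  rw [h2] at h
  rw [h, div_le_iff₀ (by positivity)]
  nlinarith [exp_3_hi, Real.exp_pos 3]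

lemma hasDerivAt_g (y : ℝ) :
    HasDerivAt (fun z => z - Real.tanh z - (1/6) * Real.tanh z ^ 3)
      (1 - (1 - Real.tanh y ^ 2) - (1/6) * (3 * Real.tanh y ^ 2 * (1 - Real.tanh y ^ 2))) y := by
  have h1 := hasDerivAt_tanh' y
  have H := ((hasDerivAt_id y).sub h1).sub ((h1.pow 3).const_mul (1/6 : ℝ))
  exact H.congr_deriv (by norm_num <;> ring)

lemma hasDerivAt_F (y : ℝ) :
    HasDerivAt (fun z => Real.tanh z + Real.tanh z ^ 3 - z)
      ((1 - Real.tanh y ^ 2) + 3 * Real.tanh y ^ 2 * (1 - Real.tanh y ^ 2) - 1) y := by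
  have h1 := hasDerivAt_tanh' y
  have H := (h1.add (h1.pow 3)).sub (hasDerivAt_id y)
  exact H.congr_deriv (by norm_num <;> ring)

/-- Lower constraint: `tanh x + (1/6) tanh³ x ≤ x` for `x ≥ 0`. -/
lemma lower_bound {x : ℝ} (hx : 0 ≤ x) :
    Real.tanh x + (1/6) * Real.tanh x ^ 3 ≤ x := by
  have hmono : Monotone (fun z => z - Real.tanh z - (1/6) * Real.tanh z ^ 3) := by
    apply monotone_of_deriv_nonneg
    · intro y; exact (hasDerivAt_g y).differentiableAt
    · intro y
      rw [(hasDerivAt_g y).deriv]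
      nlinarith [sq_nonneg (Real.tanh y), sq_nonneg (Real.tanh y ^ 2)]
  have h0 := hmono hx
  simp only [Real.tanh_zero] at h0
  norm_num at h0
  linarith

/-- Upper constraint: `x ≤ tanh x + tanh³ x` for `0 ≤ x ≤ 1.5`. -/
lemma upper_bound {x : ℝ} (hx0 : 0 ≤ x) (hx1 : x ≤ 1.5) :
    x ≤ Real.tanh x + Real.tanh x ^ 3 := by
  have hcontF : Continuous (fun z => Real.tanh z + Real.tanh z ^ 3 - z) :=
    (Differentiable.continuous (fun y => (hasDerivAt_F y).differentiableAt))
  rcases le_or_gt x 1.1 with hcase | hcase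
  · -- On [0, 1.1] the function tanh y + tanh³ y - y is monotone increasing
    have hmono : MonotoneOn (fun z => Real.tanh z + Real.tanh z ^ 3 - z)
        (Set.Icc (0:ℝ) 1.1) := by
      apply monotoneOn_of_deriv_nonneg (convex_Icc _ _) hcontF.continuousOn
      · intro y _; exact ((hasDerivAt_F y).differentiableAt).differentiableWithinAt
      · intro y hy
        rw [interior_Icc] at hy
        rw [(hasDerivAt_F y).deriv]
        have ht0 : 0 ≤ Real.tanh y := tanh_nonneg_of_nonneg hy.1.le
        have ht1 : Real.tanh y ≤ 0.8164 :=
          le_trans (tanh_strictMono.le_iff_le.2 hy.2.le) tanh_11_hi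
        nlinarith [sq_nonneg (Real.tanh y), mul_nonneg ht0 ht0,
          mul_nonneg (mul_nonneg ht0 ht0) ht0]
    have h0 := hmono (Set.mem_Icc.2 ⟨le_refl 0, by norm_num⟩)
      (Set.mem_Icc.2 ⟨hx0, hcase⟩) hx0
    simp only [Real.tanh_zero] at h0
    norm_num at h0
    linarith
  · -- On [1.1, 1.5], G z = tanh z + tanh³ z - z + (2/5) z is monotone increasing
    have hdG : ∀ y : ℝ, HasDerivAt (fun z => Real.tanh z + Real.tanh z ^ 3 - z + (2/5) * z)
        ((1 - Real.tanh y ^ 2) + 3 * Real.tanh y ^ 2 * (1 - Real.tanh y ^ 2) - 1 + 2/5) y := by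
      intro y
      have H := (hasDerivAt_F y).add ((hasDerivAt_id y).const_mul (2/5 : ℝ))
      exact H.congr_deriv (by ring)
    have hmono : MonotoneOn (fun z => Real.tanh z + Real.tanh z ^ 3 - z + (2/5) * z)
        (Set.Icc (1.1:ℝ) 1.5) := by
      apply monotoneOn_of_deriv_nonneg (convex_Icc _ _)
      · exact (hcontF.add (continuous_const.mul continuous_id)).continuousOn
      · intro y _; exact ((hdG y).differentiableAt).differentiableWithinAt
      · intro y hy
        rw [interior_Icc] at hy
        rw [(hdG y).deriv]
        have ht0 : 0 ≤ Real.tanh y := tanh_nonneg_of_nonneg (by linarith [hy.1])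
        have ht1 : Real.tanh y ≤ 0.906 :=
          le_trans (tanh_strictMono.le_iff_le.2 hy.2.le) tanh_15_hi
        nlinarith [sq_nonneg (Real.tanh y), mul_nonneg ht0 ht0,
          mul_nonneg (mul_nonneg ht0 ht0) ht0,
          mul_nonneg (mul_nonneg ht0 ht0) (mul_nonneg ht0 ht0)]
    have h0 := hmono (Set.mem_Icc.2 ⟨le_refl (1.1:ℝ), by norm_num⟩)
      (Set.mem_Icc.2 ⟨hcase.le, hx1⟩) hcase.le
    simp only at h0
    have hF11 : (0.209 : ℝ) ≤ Real.tanh 1.1 + Real.tanh 1.1 ^ 3 - 1.1 := by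
      have h1 := tanh_11_lo
      have h3 : (0.799:ℝ) ^ 3 ≤ Real.tanh 1.1 ^ 3 := pow_le_pow_left₀ (by norm_num) h1 3
      norm_num at h3
      linarith
    linarith

theorem pos_case (x : ℝ) (hx0 : 0 ≤ x) (hx1 : x ≤ 1.5) :
    (x - Real.tanh x ^ 3 - Real.tanh x) * ((1 / 6) * Real.tanh x ^ 3 + Real.tanh x - x)
      ≥ 0 := by
  have h1 := lower_bound hx0
  have h2 := upper_bound hx0 hx1
  have ha : x - Real.tanh x ^ 3 - Real.tanh x ≤ 0 := by linarith
  have hb : (1 / 6) * Real.tanh x ^ 3 + Real.tanh x - x ≤ 0 := by linarith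
  nlinarith [mul_nonneg (neg_nonneg.2 ha) (neg_nonneg.2 hb)]

/-- Cubic-based static polynomial constraint on `tanh` from Section IV of the paper:
`p(x, y) = (x - y³ - y)((1/6)y³ + y - x) ≥ 0` with `y = tanh x`, for `|x| ≤ 1.5`. -/
theorem stmt_7 (x : ℝ) (hx : |x| ≤ 1.5) :
    (x - Real.tanh x ^ 3 - Real.tanh x) * ((1 / 6) * Real.tanh x ^ 3 + Real.tanh x - x)
      ≥ 0 := by
  rcases le_or_gt 0 x with hx0 | hx0
  · have hx1 : x ≤ 1.5 := by
      have := abs_le.1 hx; linarith [this.2]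
    exact pos_case x hx0 hx1
  · have hx1 : -x ≤ 1.5 := by
      have := abs_le.1 hx; linarith [this.1]
    have h := pos_case (-x) (by linarith) hx1
    rw [Real.tanh_neg] at h
    nlinarith [h]
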